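/- Let X be a discrete topological space and f : X → X a function. Then f is fixed-point free if and only if its continuous extension f̃ : βX → βX to the Stone–Čech compactification is fixed-point free. -/

import Mathlib

open Finset in
/-- Finite version: on any finite set we can 3-color so that `x` and `f x` get
different colors, provided `f` is fixed-point free. -/
lemma finColor {X : Type*} (f : X → X) (hf : ∀ x, f x ≠ x) (S : Finset X) :
    ∃ c : X → Fin 3, ∀ x ∈ S, f x ∈ S → c x ≠ c (f x) := by
  classical
  induction S using Finset.strongInduction with
  | _ S ih =>
  rcases S.eq_empty_or_nonempty with rfl | hS
  · exact ⟨fun _ => 0, by simp⟩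
  -- find a vertex with at most one preimage inside S
  have hx : ∃ x ∈ S, (S.filter fun y => f y = x).card ≤ 1 := by
    by_contra h
    push_neg at h
    have hsum : (S.filter fun y => f y ∈ S).card
        = ∑ x ∈ S, ((S.filter fun y => f y ∈ S).filter fun y => f y = x).card :=
      Finset.card_eq_sum_card_fiberwise (fun y hy => (Finset.mem_filter.mp hy).2)
    have hsum2 : ∀ x ∈ S, ((S.filter fun y => f y ∈ S).filter fun y => f y = x).card
        = (S.filter fun y => f y = x).card := by
      intro x hxS
      congr 1
      ext y
      simp only [Finset.mem_filter]
      constructor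
      · rintro ⟨⟨h1, _⟩, h3⟩; exact ⟨h1, h3⟩
      · rintro ⟨h1, h3⟩; exact ⟨⟨h1, h3 ▸ hxS⟩, h3⟩
    have h2 : 2 * S.card ≤ ∑ x ∈ S, (S.filter fun y => f y = x).card := by
      calc 2 * S.card = ∑ _x ∈ S, 2 := by simp [mul_comm]
        _ ≤ _ := Finset.sum_le_sum fun x hxS => h x hxS
    rw [Finset.sum_congr rfl hsum2] at hsum
    have h3 : (S.filter fun y => f y ∈ S).card ≤ S.card := Finset.card_filter_le _ _
    have h4 : 1 ≤ S.card := Finset.card_pos.mpr hS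
    omega
  obtain ⟨x, hxS, hxcard⟩ := hx
  obtain ⟨c, hc⟩ := ih (S.erase x) (Finset.erase_ssubset hxS)
  -- forbidden colors
  set T : Finset (Fin 3) := insert (c (f x)) ((S.filter fun y => f y = x).image c) with hT
  have hTcard : T.card < 3 := by
    rw [hT]
    have h1 : ((S.filter fun y => f y = x).image c).card ≤ 1 :=
      le_trans (Finset.card_image_le) hxcard
    have h2 := Finset.card_insert_le (c (f x)) ((S.filter fun y => f y = x).image c)
    omega
  have : ∃ a : Fin 3, a ∉ T := by
    by_contra h
    push_neg at h
    have : (Finset.univ : Finset (Fin 3)) ⊆ T := fun a _ => h a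
    have := Finset.card_le_card this
    simp at this
    omega
  obtain ⟨a, haT⟩ := this
  refine ⟨Function.update c x a, ?_⟩
  intro z hzS hfzS
  by_cases hzx : z = x
  · subst hzx
    rw [Function.update_self, Function.update_of_ne (hf z)]
    intro h
    exact haT (h ▸ Finset.mem_insert_self _ _)
  · rw [Function.update_of_ne hzx]
    by_cases hfzx : f z = x
    · rw [hfzx, Function.update_self]
      intro h
      have hmem : c z ∈ T := Finset.mem_insert_of_mem
        (Finset.mem_image_of_mem c (Finset.mem_filter.mpr ⟨hzS, hfzx⟩))
      exact haT (h ▸ hmem)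
    · rw [Function.update_of_ne hfzx]
      exact hc z (Finset.mem_erase.mpr ⟨hzx, hzS⟩) (Finset.mem_erase.mpr ⟨hfzx, hfzS⟩)

/-- Global 3-coloring of the functional graph of a fixed-point free map. -/
lemma globalColor {X : Type*} (f : X → X) (hf : ∀ x, f x ≠ x) :
    ∃ c : X → Fin 3, ∀ x, c x ≠ c (f x) := by
  classical
  set G : SimpleGraph X :=
    { Adj := fun x y => x ≠ y ∧ (f x = y ∨ f y = x)
      symm := ⟨by rintro x y ⟨h1, h2⟩; exact ⟨h1.symm, h2.symm⟩⟩
      loopless := ⟨by rintro x ⟨h1, _⟩; exact h1 rfl⟩ } with hG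
  have key : ∀ G' : G.Subgraph, G'.verts.Finite → G'.coe →g (⊤ : SimpleGraph (Fin 3)) := by
    intro G' hfin
    have hcol := finColor f hf hfin.toFinset
    set c := hcol.choose with hcdef
    have hc := hcol.choose_spec
    refine ⟨fun v => c v.1, ?_⟩
    rintro ⟨u, hu⟩ ⟨v, hv⟩ huv
    have hadj : G.Adj u v := G'.adj_sub huv
    obtain ⟨hne, hor⟩ := hadj
    have hu' : u ∈ hfin.toFinset := hfin.mem_toFinset.mpr hu
    have hv' : v ∈ hfin.toFinset := hfin.mem_toFinset.mpr hv
    show c u ≠ c v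
    rcases hor with h | h
    · exact h ▸ hc u hu' (h ▸ hv')
    · exact (h ▸ hc v hv' (h ▸ hu')).symm
  obtain ⟨φ⟩ := SimpleGraph.nonempty_hom_of_forall_finite_subgraph_hom key
  refine ⟨φ, fun x => ?_⟩
  have : G.Adj x (f x) := ⟨fun h => hf x h.symm, Or.inl rfl⟩
  exact φ.map_rel this

theorem stmt15 {X : Type*} [TopologicalSpace X] [DiscreteTopology X]
    (f : X → X) (ftil : StoneCech X → StoneCech X)
    (hcont : Continuous ftil)
    (hext : ∀ x, ftil (stoneCechUnit x) = stoneCechUnit (f x)) :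
    (∀ x, f x ≠ x) ↔ ∀ p, ftil p ≠ p := by
  constructor
  · intro hf p hp
    obtain ⟨c, hc⟩ := globalColor f hf
    have hcc : Continuous c := continuous_of_discreteTopology
    set ct := stoneCechExtend hcc with hct
    have hcte : ∀ x, ct (stoneCechUnit x) = c x := fun x =>
      congrFun (stoneCechExtend_extends hcc) x
    set E : Set (StoneCech X) := {q | ct (ftil q) = ct q} with hE
    have hopen : IsOpen E := by
      have h1 : Continuous fun q => (ct (ftil q), ct q) :=
        ((continuous_stoneCechExtend hcc).comp hcont).prodMk
          (continuous_stoneCechExtend hcc)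
      have h2 : IsOpen {q : Fin 3 × Fin 3 | q.1 = q.2} := isOpen_discrete _
      exact h2.preimage h1
    have hnonempty : E.Nonempty := ⟨p, show ct (ftil p) = ct p by rw [hp]⟩
    obtain ⟨q, hqE, x, hxq⟩ :=
      denseRange_stoneCechUnit.inter_open_nonempty E hopen hnonempty
    rw [← hxq] at hqE
    have : ct (ftil (stoneCechUnit x)) = ct (stoneCechUnit x) := hqE
    rw [hext, hcte, hcte] at this
    exact hc x this.symm
  · intro h x hx
    exact h (stoneCechUnit x) (by rw [hext, hx])
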